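/- If I(1) = 0 and for all n > 1, I(n) = 1 + (1/n) * Σ_{i=1}^{n} I(i), then for all n ≥ 2, I(n) = 1 + Σ_{i=1}^{n-1} 1/i (i.e., one plus the (n-1)-th harmonic number). -/

import Mathlib

theorem stmt_0 (I : ℕ → ℝ) (h1 : I 1 = 0)
    (hrec : ∀ n : ℕ, 1 < n → I n = 1 + (1 / (n : ℝ)) * ∑ i ∈ Finset.Icc 1 n, I i) :
    ∀ n : ℕ, 2 ≤ n → I n = 1 + ∑ i ∈ Finset.Icc 1 (n - 1), (1 : ℝ) / (i : ℝ) := by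
  intro n hn
  induction n, hn using Nat.le_induction with
  | base =>
    have h2 := hrec 2 (by norm_num)
    rw [show Finset.Icc 1 2 = {1, 2} by decide] at h2
    simp [h1] at h2 ⊢
    linarith
  | succ n hn ih =>
    have hn0 : (n : ℝ) ≠ 0 := by positivity
    have hn1 : (n : ℝ) + 1 ≠ 0 := by positivity
    have hA := hrec n (by omega)
    have hB := hrec (n + 1) (by omega)
    rw [Finset.sum_Icc_succ_top (by omega)] at hB
    push_cast at hB
    -- derive I (n+1) = I n + 1/n
    have key : I (n + 1) = I n + 1 / n := by
      have hA' : ∑ i ∈ Finset.Icc 1 n, I i = n * (I n - 1) := by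
        field_simp at hA
        linarith
      rw [hA'] at hB
      field_simp at hB ⊢
      nlinarith [hB]
    rw [key, ih, show n + 1 - 1 = n by omega]
    have hset : Finset.Icc 1 n = Finset.Icc 1 (n - 1 + 1) := by congr 1; omega
    rw [hset, Finset.sum_Icc_succ_top (by omega), show n - 1 + 1 = n from by omega]
    ring
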